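/- Let d ≥ 3. If G is a connected d-regular graph of odd girth g ≥ 3 on n vertices, then kiss(G) ≤ n(n(d-2)+2) / (2·log_{d-1}((n(d-2)+2)/d) + 1). -/

import Mathlib

set_option maxHeartbeats 1000000

open SimpleGraph

/-- Shortest oriented cycles equipped with a starting point. -/
noncomputable def rootedShortestCycles {V : Type*} (G : SimpleGraph V) (g : ℕ) : ℕ :=
  {p : (v : V) × G.Walk v v | p.2.IsCycle ∧ p.2.length = g}.ncard

/-- The kissing number: shortest oriented cycles up to cyclic rotation. -/
noncomputable def kissingNumber {V : Type*} (G : SimpleGraph V) (g : ℕ) : ℕ :=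
  rootedShortestCycles G g / g

open Walk Finset

section Aux

variable {V : Type*}

/-- Walks with equal lengths and equal vertex sequences are equal. -/
lemma walk_ext {G : SimpleGraph V} {u w : V} (p q : G.Walk u w)
    (hl : p.length = q.length) (hv : ∀ i, p.getVert i = q.getVert i) : p = q := by
  induction p with
  | nil =>
    cases q with
    | nil => rfl
    | cons h r => simp at hl
  | @cons u b w h p ih =>
    cases q with
    | nil => simp at hl
    | @cons _ b' _ h' q' =>
      have hb : b = b' := by
        have := hv 1
        simpa [Walk.getVert_cons_succ, Walk.getVert_zero] using this
      subst hb
      have := ih q' (by simpa using hl) (fun i => hv (i+1))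
      subst this
      rfl

lemma egirth_le_of_cycle {G : SimpleGraph V} {x : V} {c : G.Walk x x} (hc : c.IsCycle) :
    G.egirth ≤ c.length := by
  rw [SimpleGraph.egirth]
  exact iInf_le_of_le x <| iInf_le_of_le c <| iInf_le_of_le hc le_rfl

/-- Two distinct paths with the same endpoints yield a cycle of length at most the sum
of their lengths. -/
lemma exists_cycle_of_two_paths {G : SimpleGraph V} {u w : V} {p q : G.Walk u w}
    (hp : p.IsPath) (hq : q.IsPath) (hne : p ≠ q) :
    ∃ (x : V) (c : G.Walk x x), c.IsCycle ∧ c.length ≤ p.length + q.length := by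
  classical
  set s : Set (Sym2 V) := {e | e ∈ p.edges ∨ e ∈ q.edges} with hs
  set H : SimpleGraph V := SimpleGraph.fromEdgeSet s with hH
  have hHle : H ≤ G := by
    intro a b hab
    rw [hH, SimpleGraph.fromEdgeSet_adj] at hab
    rcases hab.1 with h | h
    · exact (G.mem_edgeSet).1 (p.edges_subset_edgeSet h)
    · exact (G.mem_edgeSet).1 (q.edges_subset_edgeSet h)
  have hedge : ∀ {r : G.Walk u w}, (∀ e ∈ r.edges, e ∈ s) → ∀ e ∈ r.edges, e ∈ H.edgeSet := by
    intro r hr e he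
    rw [hH, SimpleGraph.edgeSet_fromEdgeSet]
    exact ⟨hr e he, G.not_isDiag_of_mem_edgeSet (r.edges_subset_edgeSet he)⟩
  have hpe : ∀ e ∈ p.edges, e ∈ H.edgeSet := hedge (fun e he => Or.inl he)
  have hqe : ∀ e ∈ q.edges, e ∈ H.edgeSet := hedge (fun e he => Or.inr he)
  set p' : H.Walk u w := p.transfer H hpe with hp'
  set q' : H.Walk u w := q.transfer H hqe with hq'
  have hp'path : p'.IsPath := hp.transfer hpe
  have hq'path : q'.IsPath := hq.transfer hqe
  have hne' : p' ≠ q' := by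
    intro h
    apply hne
    have := congrArg (fun r : H.Walk u w => r.transfer G
      (fun e he => SimpleGraph.edgeSet_mono hHle (r.edges_subset_edgeSet he))) h
    simpa [hp', hq', Walk.transfer_transfer, Walk.transfer_self] using this
  have hnacyc : ¬ H.IsAcyclic := by
    intro hac
    exact hne' (congrArg Subtype.val
      (SimpleGraph.isAcyclic_iff_path_unique.1 hac ⟨p', hp'path⟩ ⟨q', hq'path⟩))
  simp only [SimpleGraph.IsAcyclic, not_forall, not_not] at hnacyc
  obtain ⟨x, c, hc⟩ := hnacyc
  refine ⟨x, c.mapLe hHle, hc.mapLe hHle, ?_⟩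
  have hlen : (c.mapLe hHle).length = c.length := by simp [Walk.mapLe, Walk.length_map]
  rw [hlen]
  have hnodup : c.edges.Nodup := hc.edges_nodup
  have hsub : c.edges ⊆ p.edges ++ q.edges := by
    intro e he
    have : e ∈ H.edgeSet := c.edges_subset_edgeSet he
    rw [hH, SimpleGraph.edgeSet_fromEdgeSet] at this
    rcases this.1 with h | h
    · exact List.mem_append.2 (Or.inl h)
    · exact List.mem_append.2 (Or.inr h)
  calc c.length = c.edges.length := (Walk.length_edges c).symm
    _ ≤ (p.edges ++ q.edges).length := (hnodup.subperm hsub).length_le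
    _ = p.length + q.length := by simp [Walk.length_edges]

lemma length_dropW {G : SimpleGraph V} {u v : V} (p : G.Walk u v) (n : ℕ) :
    (p.drop n).length = p.length - n := by
  induction p generalizing n with
  | nil => simp [Walk.drop]
  | cons h q ih =>
    cases n with
    | zero => simp [Walk.drop]
    | succ n => simpa [Walk.drop] using ih n

lemma getVert_dropW {G : SimpleGraph V} {u v : V} (p : G.Walk u v) (n i : ℕ) :
    (p.drop n).getVert i = p.getVert (n + i) := by
  induction p generalizing n with
  | nil => simp [Walk.drop, Walk.getVert_of_length_le]
  | cons h q ih =>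
    cases n with
    | zero => simp [Walk.drop]
    | succ n =>
      simp only [Walk.drop, Walk.getVert_copy, Walk.getVert_cons_succ]
      rw [show n + 1 + i = (n + i) + 1 by omega, Walk.getVert_cons_succ]
      exact ih n

lemma support_dropW {G : SimpleGraph V} {u v : V} (p : G.Walk u v) (n : ℕ)
    (hn : n ≤ p.length) : (p.drop n).support = p.support.drop n := by
  induction p generalizing n with
  | nil =>
    simp only [Walk.length_nil, Nat.le_zero] at hn
    subst hn
    simp [Walk.drop]
  | cons h q ih =>
    cases n with
    | zero => simp [Walk.drop]
    | succ n =>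
      simp only [Walk.drop, Walk.support_copy, Walk.support_cons, List.drop_succ_cons]
      exact ih n (by simpa using hn)

/-- A shortest (odd) cycle is determined by its first `k+1` steps. -/
lemma cycle_eq_of_agree {G : SimpleGraph V} {k : ℕ}
    (hcyc : ∀ {x : V} (c : G.Walk x x), c.IsCycle → 2*k+1 ≤ c.length)
    {v : V} {w₁ w₂ : G.Walk v v} (h₁ : w₁.IsCycle) (h₂ : w₂.IsCycle)
    (l₁ : w₁.length = 2*k+1) (l₂ : w₂.length = 2*k+1)
    (hagree : ∀ i ≤ k+1, w₁.getVert i = w₂.getVert i) : w₁ = w₂ := by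
  have hx : w₂.getVert (k+1) = w₁.getVert (k+1) := (hagree (k+1) le_rfl).symm
  set d₁ : G.Walk (w₁.getVert (k+1)) v := w₁.drop (k+1) with hd₁
  set d₂ : G.Walk (w₁.getVert (k+1)) v := (w₂.drop (k+1)).copy hx rfl with hd₂
  have hlen₁ : d₁.length = k := by rw [hd₁, length_dropW, l₁]; omega
  have hlen₂ : d₂.length = k := by rw [hd₂, Walk.length_copy, length_dropW, l₂]; omega
  have hpath : ∀ {y : V} (c : G.Walk y y), c.IsCycle → c.length = 2*k+1 →
      ((c.drop (k+1)).IsPath) := by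
    intro y c hc lc
    rw [Walk.isPath_def, support_dropW c (k+1) (by omega)]
    have : c.support = y :: c.support.tail := by
      cases c with
      | nil => simp at lc
      | cons h r => simp
    rw [this, List.drop_succ_cons]
    exact (List.drop_sublist k c.support.tail).nodup hc.support_nodup
  have hp₁ : d₁.IsPath := hpath w₁ h₁ l₁
  have hp₂ : d₂.IsPath := by
    rw [hd₂]
    have := hpath w₂ h₂ l₂
    rwa [Walk.isPath_def, Walk.support_copy, ← Walk.isPath_def] at *
  have hdeq : d₁ = d₂ := by
    by_contra hne
    obtain ⟨x, c, hc, hlc⟩ := exists_cycle_of_two_paths hp₁ hp₂ hne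
    have := hcyc c hc
    omega
  apply walk_ext w₁ w₂ (by omega)
  intro i
  rcases le_or_gt i (k+1) with hi | hi
  · exact hagree i hi
  · have hj : i = (k+1) + (i - (k+1)) := by omega
    rw [hj]
    rw [← getVert_dropW w₁ (k+1) (i - (k+1)), ← getVert_dropW w₂ (k+1) (i - (k+1))]
    rw [← hd₁]
    have : w₂.drop (k+1) = d₂.copy hx.symm rfl := by rw [hd₂]; simp
    rw [this, Walk.getVert_copy, hdeq]

lemma getVert_eq_support_getElem {G : SimpleGraph V} {u v : V} (p : G.Walk u v) {i : ℕ}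
    (h : i < p.support.length) : p.getVert i = p.support[i] := by
  induction p generalizing i with
  | nil =>
    simp only [Walk.support_nil, List.length_singleton] at h
    interval_cases i
    · simp
  | cons hadj q ih =>
    cases i with
    | zero => simp
    | succ i =>
      simp only [Walk.support_cons, List.getElem_cons_succ, Walk.getVert_cons_succ]
      exact ih (by simpa [Walk.length_support] using (by
        simpa [Walk.length_support] using h : i + 1 < q.support.length + 1))

lemma cycle_getVert_ne {G : SimpleGraph V} {v : V} {c : G.Walk v v} (hc : c.IsCycle) {a b : ℕ}
    (ha : 1 ≤ a) (hab : a < b) (hb : b ≤ c.length) : c.getVert a ≠ c.getVert b := by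
  intro h
  have hlen : c.support.length = c.length + 1 := Walk.length_support c
  have htl : c.support.tail.length = c.length := by
    rw [List.length_tail, hlen]
    omega
  have h1 : c.getVert a = c.support[a]'(by omega) := _root_.getVert_eq_support_getElem c (by omega)
  have h2 : c.getVert b = c.support[b]'(by omega) := _root_.getVert_eq_support_getElem c (by omega)
  have e1 : c.support.tail[a-1]'(by omega) = c.support[a]'(by omega) := by
    rw [List.getElem_tail]
    congr 1
    omega
  have e2 : c.support.tail[b-1]'(by omega) = c.support[b]'(by omega) := by
    rw [List.getElem_tail]
    congr 1
    omega
  have hab' : a - 1 = b - 1 :=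
    hc.support_nodup.getElem_inj_iff.mp (e1.trans (h1.symm.trans (h.trans (h2.trans e2.symm))))
  omega

lemma cycle_getVert_ne0 {G : SimpleGraph V} {v : V} {c : G.Walk v v} (hc : c.IsCycle) {b : ℕ}
    (hb1 : 1 ≤ b) (hb : b < c.length) : c.getVert 0 ≠ c.getVert b := by
  intro h
  exact (cycle_getVert_ne hc hb1 hb le_rfl)
    (by rw [← h, Walk.getVert_zero, Walk.getVert_length])

lemma enc_step_inj {m : ℕ} {S₁ S₂ : Finset V} (hS : S₁ = S₂) {x₁ x₂ : V}
    {h₁ : x₁ ∈ S₁} {h₂ : x₂ ∈ S₂} {e₁ : S₁.card = m} {e₂ : S₂.card = m}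
    (h : Fin.cast e₁ (S₁.equivFin ⟨x₁, h₁⟩) = Fin.cast e₂ (S₂.equivFin ⟨x₂, h₂⟩)) :
    x₁ = x₂ := by
  subst hS
  have hv : (S₁.equivFin ⟨x₁, h₁⟩ : Fin S₁.card).val = (S₁.equivFin ⟨x₂, h₂⟩).val := by
    simpa using congrArg Fin.val h
  have := S₁.equivFin.injective (Fin.ext hv)
  exact Subtype.ext_iff.mp this

lemma rooted_le [Fintype V] (G : SimpleGraph V) [DecidableRel G.Adj]
    (d k : ℕ) (hd : 3 ≤ d) (hk : 1 ≤ k) (hreg : G.IsRegularOfDegree d)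
    (hcyc : ∀ {x : V} (c : G.Walk x x), c.IsCycle → 2*k+1 ≤ c.length) :
    rootedShortestCycles G (2*k+1) ≤ Fintype.card V * (d * (d-1)^k) := by
  classical
  rcases isEmpty_or_nonempty V with hV | hV
  · have : {p : (v : V) × G.Walk v v | p.2.IsCycle ∧ p.2.length = 2*k+1} = ∅ :=
      Set.eq_empty_of_isEmpty _
    rw [rootedShortestCycles, this, Set.ncard_empty]
    exact Nat.zero_le _
  have hcardA : ∀ v : V, (G.neighborFinset v).card = d := hreg
  have hcardB : ∀ a b : V, G.Adj a b → ((G.neighborFinset b).erase a).card = d - 1 := by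
    intro a b hab
    rw [Finset.card_erase_of_mem (by rw [SimpleGraph.mem_neighborFinset]; exact hab.symm)]
    rw [hcardA b]
  -- facts about shortest cycles
  have mem1 : ∀ {v : V} {w : G.Walk v v}, w.IsCycle → w.length = 2*k+1 →
      w.getVert 1 ∈ G.neighborFinset v := by
    intro v w hw hl
    rw [SimpleGraph.mem_neighborFinset]
    have := w.adj_getVert_succ (i := 0) (by omega)
    simpa [Walk.getVert_zero] using this
  have adjStep : ∀ {v : V} {w : G.Walk v v}, w.length = 2*k+1 → ∀ j : ℕ, j < 2*k+1 →
      G.Adj (w.getVert j) (w.getVert (j+1)):= by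
    intro v w hl j hj
    exact w.adj_getVert_succ (by omega)
  have memi : ∀ {v : V} {w : G.Walk v v} (hw : w.IsCycle) (hl : w.length = 2*k+1) (i : Fin k),
      w.getVert ((i : ℕ)+2) ∈ (G.neighborFinset (w.getVert ((i : ℕ)+1))).erase
        (w.getVert (i : ℕ)) := by
    intro v w hw hl i
    have hik : (i : ℕ) < k := i.isLt
    rw [Finset.mem_erase, SimpleGraph.mem_neighborFinset]
    constructor
    · rcases Nat.eq_zero_or_pos (i : ℕ) with h0 | h0
      · rw [h0]
        exact (cycle_getVert_ne0 hw (by omega) (by omega)).symm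
      · exact (cycle_getVert_ne hw h0 (by omega) (by omega)).symm
    · exact adjStep hl ((i : ℕ)+1) (by omega)
  set s : Set ((v : V) × G.Walk v v) :=
    {p : (v : V) × G.Walk v v | p.2.IsCycle ∧ p.2.length = 2*k+1} with hs
  have hd1 : 0 < d := by omega
  have hd2 : 0 < d - 1 := by omega
  set enc : ((v : V) × G.Walk v v) → V × Fin d × (Fin k → Fin (d-1)) := fun p =>
    if h : p.2.IsCycle ∧ p.2.length = 2*k+1 then
      ⟨p.1,
       Fin.cast (hcardA p.1) ((G.neighborFinset p.1).equivFin ⟨p.2.getVert 1, mem1 h.1 h.2⟩),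
       fun i => Fin.cast (hcardB (p.2.getVert (i : ℕ)) (p.2.getVert ((i : ℕ)+1))
           (adjStep h.2 (i : ℕ) (by omega)))
         (((G.neighborFinset (p.2.getVert ((i : ℕ)+1))).erase (p.2.getVert (i : ℕ))).equivFin
           ⟨p.2.getVert ((i : ℕ)+2), memi h.1 h.2 i⟩)⟩
    else ⟨Classical.arbitrary V, ⟨0, hd1⟩, fun _ => ⟨0, hd2⟩⟩ with henc
  have hinj : Set.InjOn enc s := by
    rintro ⟨v₁, w₁⟩ hp₁ ⟨v₂, w₂⟩ hp₂ heq
    obtain ⟨hc₁, hl₁⟩ := hp₁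
    obtain ⟨hc₂, hl₂⟩ := hp₂
    simp only [henc, dif_pos (And.intro hc₁ hl₁), dif_pos (And.intro hc₂ hl₂)] at heq
    have hv : v₁ = v₂ := congrArg (fun t => t.1) heq
    subst hv
    have h1 : Fin.cast (hcardA v₁) ((G.neighborFinset v₁).equivFin ⟨w₁.getVert 1, mem1 hc₁ hl₁⟩)
        = Fin.cast (hcardA v₁) ((G.neighborFinset v₁).equivFin ⟨w₂.getVert 1, mem1 hc₂ hl₂⟩) :=
      congrArg (fun t => t.2.1) heq
    have hfun := congrArg (fun t => t.2.2) heq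
    have key : ∀ i, i ≤ k+1 → w₁.getVert i = w₂.getVert i := by
      intro i
      induction i using Nat.strong_induction_on with
      | _ i ih =>
        intro hik
        match i, hik with
        | 0, _ => simp [Walk.getVert_zero]
        | 1, _ => exact enc_step_inj rfl h1
        | (j+2), hik =>
          have hj : w₁.getVert j = w₂.getVert j := ih j (by omega) (by omega)
          have hj1 : w₁.getVert (j+1) = w₂.getVert (j+1) := ih (j+1) (by omega) (by omega)
          have h3 := congrFun hfun ⟨j, by omega⟩
          dsimp only at h3
          have hS : (G.neighborFinset (w₁.getVert (j+1))).erase (w₁.getVert j)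
              = (G.neighborFinset (w₂.getVert (j+1))).erase (w₂.getVert j) := by
            rw [hj, hj1]
          exact enc_step_inj hS h3
    have hwalk : w₁ = w₂ := cycle_eq_of_agree hcyc hc₁ hc₂ hl₁ hl₂ key
    simp [hwalk]
  have hmaps : ∀ p ∈ s, enc p ∈ (Set.univ : Set (V × Fin d × (Fin k → Fin (d-1)))) :=
    fun _ _ => Set.mem_univ _
  have hle := Set.ncard_le_ncard_of_injOn enc hmaps hinj Set.finite_univ
  rw [rootedShortestCycles, ← hs]
  calc s.ncard ≤ (Set.univ : Set (V × Fin d × (Fin k → Fin (d-1)))).ncard := hle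
    _ = Fintype.card V * (d * (d-1)^k) := by
      rw [Set.ncard_univ, Nat.card_eq_fintype_card]
      simp [Fintype.card_prod, Fintype.card_fin, Fintype.card_fun]

lemma geom_aux (e : ℕ) : ∀ k : ℕ, (∑ i ∈ Finset.range k, (e+1)^i) * e + 1 = (e+1)^k := by
  intro k
  induction k with
  | zero => simp
  | succ k ih =>
    rw [Finset.sum_range_succ, pow_succ]
    nlinarith [ih]

lemma moore_bound [Fintype V] (G : SimpleGraph V) [DecidableRel G.Adj]
    (d k : ℕ) (hd : 3 ≤ d) (hk : 1 ≤ k) (hreg : G.IsRegularOfDegree d) (hconn : G.Connected)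
    (hcyc : ∀ {x : V} (c : G.Walk x x), c.IsCycle → 2*k+1 ≤ c.length) :
    d * (d-1)^k ≤ Fintype.card V * (d - 2) + 2 := by
  classical
  obtain ⟨v₀⟩ := hconn.nonempty
  -- vertices along a walk are close to its start
  have hdistle : ∀ {a u : V} (p : G.Walk a u) (m : ℕ), G.dist a (p.getVert m) ≤ m := by
    intro a u p m
    induction p generalizing m with
    | nil => simp [Walk.getVert_of_length_le, SimpleGraph.dist_self]
    | @cons a b u hab q ih =>
      cases m with
      | zero => simp
      | succ m =>
        calc G.dist a (q.getVert m) ≤ G.dist a b + G.dist b (q.getVert m) :=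
              hconn.dist_triangle
          _ ≤ 1 + m := by
              have h1 : G.dist a b = 1 := (SimpleGraph.dist_eq_one_iff_adj).mpr hab
              have := ih (m := m)
              omega
          _ = m + 1 := by omega
  -- geodesic paths
  have geod : ∀ u : V, ∃ p : G.Walk v₀ u, p.IsPath ∧ p.length = G.dist v₀ u ∧
      ∀ m, G.dist v₀ (p.getVert m) ≤ m := by
    intro u
    obtain ⟨w, hw⟩ := hconn.exists_walk_length_eq_dist v₀ u
    exact ⟨w.bypass, w.bypass_isPath,
      le_antisymm (hw ▸ w.length_bypass_le) (SimpleGraph.dist_le _),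
      fun m => hdistle _ m⟩
  -- a vertex strictly further than the endpoint is not on a geodesic
  have hnotmem : ∀ {u x : V} (p : G.Walk v₀ u), p.IsPath → p.length = G.dist v₀ u →
      G.dist v₀ u ≤ G.dist v₀ x → x ≠ u → x ∉ p.support := by
    intro u x p hp hlen hgt hne hmem
    obtain ⟨m, hm, hmle⟩ := Walk.mem_support_iff_exists_getVert.mp hmem
    have h1 : G.dist v₀ x ≤ m := hm ▸ hdistle p m
    have h2 : m = p.length := by omega
    apply hne
    rw [← hm, h2, Walk.getVert_length]
  -- at most one neighbour closer to v₀
  have hU1 : ∀ (x : V) (j : ℕ), 1 ≤ j → j ≤ k → G.dist v₀ x = j →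
      ((G.neighborFinset x).filter (fun y => G.dist v₀ y < j)).card ≤ 1 := by
    intro x j hj1 hjk hx
    rw [Finset.card_le_one]
    intro y hy z hz
    by_contra hne
    rw [Finset.mem_filter, SimpleGraph.mem_neighborFinset] at hy hz
    obtain ⟨py, hpy, hpylen, _⟩ := geod y
    obtain ⟨pz, hpz, hpzlen, _⟩ := geod z
    have hqy : (Walk.cons hy.1 py.reverse).IsPath := by
      rw [Walk.cons_isPath_iff]
      refine ⟨hpy.reverse, ?_⟩
      rw [Walk.support_reverse, List.mem_reverse]
      exact hnotmem py hpy hpylen (by omega) (fun h => by rw [h] at hx; omega)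
    have hqz : (Walk.cons hz.1 pz.reverse).IsPath := by
      rw [Walk.cons_isPath_iff]
      refine ⟨hpz.reverse, ?_⟩
      rw [Walk.support_reverse, List.mem_reverse]
      exact hnotmem pz hpz hpzlen (by omega) (fun h => by rw [h] at hx; omega)
    have hne' : (Walk.cons hy.1 py.reverse) ≠ (Walk.cons hz.1 pz.reverse) := by
      intro h
      apply hne
      have := congrArg (fun q : G.Walk x v₀ => q.getVert 1) h
      simpa [Walk.getVert_cons_succ, Walk.getVert_zero] using this
    obtain ⟨x', c, hc, hclen⟩ := exists_cycle_of_two_paths hqy hqz hne'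
    have hlc := hcyc c hc
    have e1 : (Walk.cons hy.1 py.reverse).length = py.length + 1 := by
      simp [Walk.length_cons, Walk.length_reverse]
    have e2 : (Walk.cons hz.1 pz.reverse).length = pz.length + 1 := by
      simp [Walk.length_cons, Walk.length_reverse]
    omega
  -- no neighbours on the same level (below level k)
  have hU2 : ∀ (x y : V) (j : ℕ), 1 ≤ j → j + 1 ≤ k → G.dist v₀ x = j → G.Adj x y →
      G.dist v₀ y = j → False := by
    intro x y j hj1 hjk hx hadj hy
    obtain ⟨px, hpx, hpxlen, hpxdist⟩ := geod x
    obtain ⟨py, hpy, hpylen, _⟩ := geod y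
    have hq2 : (Walk.cons hadj py.reverse).IsPath := by
      rw [Walk.cons_isPath_iff]
      refine ⟨hpy.reverse, ?_⟩
      rw [Walk.support_reverse, List.mem_reverse]
      exact hnotmem py hpy hpylen (by omega) hadj.ne
    have hne' : px.reverse ≠ (Walk.cons hadj py.reverse) := by
      intro h
      have h1 := congrArg (fun q : G.Walk x v₀ => q.getVert 1) h
      simp only [Walk.getVert_cons_succ, Walk.getVert_zero] at h1
      rw [Walk.getVert_reverse] at h1
      have : G.dist v₀ (px.getVert (px.length - 1)) ≤ px.length - 1 := hpxdist _
      rw [h1] at this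
      omega
    obtain ⟨x', c, hc, hclen⟩ := exists_cycle_of_two_paths hpx.reverse hq2 hne'
    have hlc := hcyc c hc
    have e1 : px.reverse.length = px.length := Walk.length_reverse px
    have e2 : (Walk.cons hadj py.reverse).length = py.length + 1 := by
      simp [Walk.length_cons, Walk.length_reverse]
    omega
  -- the distance spheres
  set S : ℕ → Finset V := fun i => Finset.univ.filter (fun x => G.dist v₀ x = i) with hS
  have hS0 : (S 0).card = 1 := by
    have : S 0 = {v₀} := by
      ext x
      simp only [hS, Finset.mem_filter, Finset.mem_univ, true_and, Finset.mem_singleton]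
      rw [hconn.dist_eq_zero_iff]
      exact eq_comm
    rw [this, Finset.card_singleton]
  have hS1 : (S 1).card = d := by
    have : S 1 = G.neighborFinset v₀ := by
      ext x
      simp [hS, SimpleGraph.dist_eq_one_iff_adj, SimpleGraph.mem_neighborFinset]
    rw [this]
    exact hreg v₀
  have hgrow : ∀ j, 1 ≤ j → j + 1 ≤ k → (S j).card * (d-1) ≤ (S (j+1)).card := by
    intro j hj1 hjk
    have := Finset.card_mul_le_card_mul (r := G.Adj) (s := S j) (t := S (j+1))
      (m := d - 1) (n := 1) ?_ ?_
    · simpa using this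
    · intro x hxS
      rw [hS, Finset.mem_filter] at hxS
      have hx : G.dist v₀ x = j := hxS.2
      -- neighbours of x not at distance j+1 are at distance < j
      have hsub : (G.neighborFinset x).filter (fun y => ¬ G.dist v₀ y = j+1) ⊆
          (G.neighborFinset x).filter (fun y => G.dist v₀ y < j) := by
        intro y hy
        rw [Finset.mem_filter] at hy ⊢
        obtain ⟨hyn, hyne⟩ := hy
        refine ⟨hyn, ?_⟩
        rw [SimpleGraph.mem_neighborFinset] at hyn
        have hle : G.dist v₀ y ≤ j + 1 := by
          have := hconn.dist_triangle (u := v₀) (v := x) (w := y)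
          have h1 : G.dist x y = 1 := (SimpleGraph.dist_eq_one_iff_adj).mpr hyn
          omega
        have hne2 : G.dist v₀ y ≠ j := fun h => hU2 x y j hj1 hjk hx hyn h
        omega
      have hcard1 : ((G.neighborFinset x).filter (fun y => ¬ G.dist v₀ y = j+1)).card ≤ 1 :=
        le_trans (Finset.card_le_card hsub) (hU1 x j hj1 (by omega) hx)
      have hsplit := Finset.card_filter_add_card_filter_not
        (s := G.neighborFinset x) (p := fun y => G.dist v₀ y = j+1)
      have hdn : (G.neighborFinset x).card = d := hreg x
      -- bipartiteAbove contains the filtered neighbours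
      have hsub2 : (G.neighborFinset x).filter (fun y => G.dist v₀ y = j+1) ⊆
          Finset.bipartiteAbove G.Adj (S (j+1)) x := by
        intro y hy
        rw [Finset.mem_filter] at hy
        rw [Finset.mem_bipartiteAbove]
        refine ⟨?_, (SimpleGraph.mem_neighborFinset _ _ _).mp hy.1⟩
        rw [hS, Finset.mem_filter]
        exact ⟨Finset.mem_univ _, hy.2⟩
      have := Finset.card_le_card hsub2
      omega
    · intro y hyS
      rw [hS, Finset.mem_filter] at hyS
      have hy : G.dist v₀ y = j + 1 := hyS.2
      have hsub3 : Finset.bipartiteBelow G.Adj (S j) y ⊆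
          (G.neighborFinset y).filter (fun x => G.dist v₀ x < j + 1) := by
        intro x hx
        rw [Finset.mem_bipartiteBelow] at hx
        rw [Finset.mem_filter, SimpleGraph.mem_neighborFinset]
        refine ⟨hx.2.symm, ?_⟩
        have := hx.1
        rw [hS, Finset.mem_filter] at this
        omega
      exact le_trans (Finset.card_le_card hsub3) (hU1 y (j+1) (by omega) (by omega) hy)
  -- sphere sizes grow geometrically
  have hsize : ∀ j, 1 ≤ j → j ≤ k → d * (d-1)^(j-1) ≤ (S j).card := by
    intro j
    induction j with
    | zero => omega
    | succ j ih =>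
      intro _ hjk
      rcases Nat.eq_zero_or_pos j with h0 | h0
      · subst h0
        simpa using hS1.ge
      · have h1 : d * (d-1)^(j-1) ≤ (S j).card := ih h0 (by omega)
        have h2 := hgrow j h0 hjk
        have e : j + 1 - 1 = j := by omega
        rw [e]
        calc d * (d-1)^j = d * (d-1)^(j-1) * (d-1) := by
              rw [mul_assoc, ← pow_succ]
              congr 2
              omega
          _ ≤ (S j).card * (d-1) := Nat.mul_le_mul_right _ h1
          _ ≤ (S (j+1)).card := h2
  -- the spheres are disjoint, so their sizes sum up to at most n
  have hsum : ∑ j ∈ Finset.range (k+1), (S j).card ≤ Fintype.card V := by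
    rw [← Finset.card_biUnion]
    · exact Finset.card_le_univ _
    · intro i _ j _ hij
      simp only [hS, Finset.disjoint_left, Finset.mem_filter]
      rintro x ⟨_, h1⟩ ⟨_, h2⟩
      omega
  have hlower : 1 + d * (∑ i ∈ Finset.range k, (d-1)^i) ≤ Fintype.card V := by
    have h1 : ∑ j ∈ Finset.range (k+1), (S j).card
        = (S 0).card + ∑ j ∈ Finset.range k, (S (j+1)).card := by
      rw [Finset.sum_range_succ']
      omega
    have h2 : ∀ j ∈ Finset.range k, d * (d-1)^j ≤ (S (j+1)).card := by
      intro j hj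
      rw [Finset.mem_range] at hj
      have := hsize (j+1) (by omega) (by omega)
      simpa using this
    calc 1 + d * (∑ i ∈ Finset.range k, (d-1)^i)
        = (S 0).card + ∑ i ∈ Finset.range k, d * (d-1)^i := by
          rw [hS0, Finset.mul_sum]
      _ ≤ (S 0).card + ∑ j ∈ Finset.range k, (S (j+1)).card := by
          gcongr with j hj
          exact h2 j hj
      _ = ∑ j ∈ Finset.range (k+1), (S j).card := h1.symm
      _ ≤ Fintype.card V := hsum
  -- conclude by the geometric sum identity
  set Sg : ℕ := ∑ i ∈ Finset.range k, (d-1)^i with hSg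
  have hgeom : Sg * (d-2) + 1 = (d-1)^k := by
    have he : d - 1 = (d-2) + 1 := by omega
    have := geom_aux (d-2) k
    rw [hSg, he]
    exact this
  have hfinal : d * (d-1)^k = d * Sg * (d-2) + d := by
    rw [← hgeom]
    ring
  rw [hfinal]
  have h5 : (1 + d * Sg) * (d-2) + 2 ≤ Fintype.card V * (d-2) + 2 := by
    have := Nat.mul_le_mul_right (d-2) hlower
    omega
  have h6 : (1 + d * Sg) * (d-2) + 2 = d * Sg * (d-2) + d := by
    rw [add_mul, one_mul]
    omega
  omega

end Aux

lemma div_le_div_of_nonneg_right' {a b c : ℝ} (h : a ≤ b) (hc : 0 < c) : a / c ≤ b / c :=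
  (div_le_div_iff_of_pos_right hc).mpr h

/-- If `G` is a connected `d`-regular graph (`d ≥ 3`) of odd girth `g ≥ 3` on
`n` vertices, then
`kiss(G) ≤ n(n(d-2)+2) / (2·log_{d-1}((n(d-2)+2)/d) + 1)`. -/
theorem kissing_number_le_odd_girth {V : Type*} [Fintype V] (G : SimpleGraph V)
    [DecidableRel G.Adj] (n d g : ℕ) (hd : 3 ≤ d) (hreg : G.IsRegularOfDegree d) (hconn : G.Connected)
    (hg : G.girth = g) (hodd : Odd g) (hg3 : 3 ≤ g) (hn : Fintype.card V = n) :
    (kissingNumber G g : ℝ) ≤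
      n * ((n : ℝ) * ((d : ℝ) - 2) + 2) /
        (2 * Real.logb ((d : ℝ) - 1) (((n : ℝ) * ((d : ℝ) - 2) + 2) / d) + 1) := by
  classical
  obtain ⟨k, hk2⟩ := hodd
  have hk : 1 ≤ k := by omega
  -- every cycle has length at least g
  have hcyc : ∀ {x : V} (c : G.Walk x x), c.IsCycle → 2*k+1 ≤ c.length := by
    intro x c hc
    have hegirth : G.egirth ≠ ⊤ := by
      intro h
      rw [SimpleGraph.girth, h] at hg
      simp at hg
      omega
    have hcoe : (g : ℕ∞) = G.egirth := by
      rw [← hg, SimpleGraph.girth, ENat.coe_toNat hegirth]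
    have h1 : (g : ℕ∞) ≤ (c.length : ℕ∞) := hcoe ▸ egirth_le_of_cycle hc
    rw [Nat.cast_le] at h1
    omega
  subst hn
  set n := Fintype.card V with hn
  have hroot : rootedShortestCycles G g ≤ n * (d * (d-1)^k) := by
    rw [hk2]
    exact rooted_le G d k hd hk hreg hcyc
  have hmoore : d * (d-1)^k ≤ n * (d - 2) + 2 :=
    moore_bound G d k hd hk hreg hconn hcyc
  -- real number set-up
  set b : ℝ := (d : ℝ) - 1 with hb
  set M : ℝ := (n : ℝ) * ((d : ℝ) - 2) + 2 with hM
  set R : ℝ := Real.logb b (M / d) with hR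
  have hb2 : (2 : ℝ) ≤ b := by
    rw [hb]
    have : (3 : ℝ) ≤ (d : ℝ) := by exact_mod_cast hd
    linarith
  have hb1 : (1 : ℝ) < b := by linarith
  have hb0 : (0 : ℝ) < b := by linarith
  have hd0 : (0 : ℝ) < (d : ℝ) := by
    have : (3 : ℝ) ≤ (d : ℝ) := by exact_mod_cast hd
    linarith
  have hcastM : ((n * (d - 2) + 2 : ℕ) : ℝ) = M := by
    rw [hM]
    push_cast [Nat.cast_sub (by omega : 2 ≤ d)]
    ring
  have hcastb : (((d-1 : ℕ)) : ℝ) = b := by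
    rw [hb]
    push_cast [Nat.cast_sub (by omega : 1 ≤ d)]
    ring
  have hmooreR : (d : ℝ) * b ^ k ≤ M := by
    calc (d : ℝ) * b ^ k = ((d * (d-1)^k : ℕ) : ℝ) := by push_cast [hcastb]; ring
      _ ≤ ((n * (d - 2) + 2 : ℕ) : ℝ) := by exact_mod_cast hmoore
      _ = M := hcastM
  have hbk1 : (1:ℝ) ≤ b ^ k := one_le_pow₀ hb1.le
  have hMd : b ^ k ≤ M / d := (le_div_iff₀ hd0).mpr (by linarith [hmooreR])
  have hMdpos : (0 : ℝ) < M / d := lt_of_lt_of_le (by linarith) hMd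
  have hMpos : (0 : ℝ) < M := by
    have := (div_pos_iff).mp hMdpos
    rcases this with ⟨h, _⟩ | ⟨_, h⟩
    · exact h
    · linarith
  have hRk : (k : ℝ) ≤ R := by
    rw [hR]
    calc (k : ℝ) = Real.logb b (b ^ k) := by
          rw [Real.logb_pow, Real.logb_self_eq_one hb1]
          ring
      _ ≤ Real.logb b (M / d) := Real.logb_le_logb_of_le hb1 (by positivity) hMd
  have hk1 : (1:ℝ) ≤ (k:ℝ) := by exact_mod_cast hk
  have hD : (3 : ℝ) ≤ 2 * R + 1 := by linarith
  -- key exponential estimate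
  have hkey : b ^ k * (2 * R + 1) ≤ b ^ R * (2 * (k:ℝ) + 1) := by
    set x : ℝ := R - (k : ℝ) with hx
    have hx0 : 0 ≤ x := by linarith
    have hbx : 1 + (2/3) * x ≤ b ^ x := by
      have h2x : (2:ℝ) ^ x ≤ b ^ x := Real.rpow_le_rpow (by norm_num) hb2 hx0
      have hexp : (2:ℝ) ^ x = Real.exp (Real.log 2 * x) := by
        rw [Real.rpow_def_of_pos (by norm_num)]
      have he : Real.log 2 * x + 1 ≤ Real.exp (Real.log 2 * x) :=
        Real.add_one_le_exp _
      have hlog : (2/3 : ℝ) ≤ Real.log 2 := by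
        have := Real.log_two_gt_d9
        norm_num at this ⊢
        linarith
      nlinarith [mul_le_mul_of_nonneg_right hlog hx0]
    have hbR : b ^ R = b ^ k * b ^ x := by
      have : R = (k : ℝ) + x := by rw [hx]; ring
      rw [this, Real.rpow_add hb0, Real.rpow_natCast]
    rw [hbR]
    have hbkpos : (0:ℝ) < b ^ k := by positivity
    have hmain : 2 * R + 1 ≤ b ^ x * (2 * (k:ℝ) + 1) := by
      have h1 : (2 * (k:ℝ) + 1) * (1 + (2/3) * x) ≤ (2 * (k:ℝ) + 1) * b ^ x :=
        mul_le_mul_of_nonneg_left hbx (by linarith)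
      have h2 : 2 * R + 1 ≤ (2 * (k:ℝ) + 1) * (1 + (2/3) * x) := by
        have hxR : R = (k:ℝ) + x := by rw [hx]; ring
        rw [hxR]
        nlinarith
      linarith [h1, h2]
    calc b ^ k * (2 * R + 1) ≤ b ^ k * (b ^ x * (2 * (k:ℝ) + 1)) :=
          mul_le_mul_of_nonneg_left hmain (le_of_lt hbkpos)
      _ = b ^ k * b ^ x * (2 * (k:ℝ) + 1) := by ring
  -- the quotient M / d equals b ^ R
  have hMR : M = (d : ℝ) * b ^ R := by
    rw [hR, Real.rpow_logb hb0 (by linarith) hMdpos]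
    field_simp
  -- put everything together
  have hgcast : ((g : ℕ) : ℝ) = 2 * (k:ℝ) + 1 := by
    rw [hk2]
    push_cast
    ring
  have hchain1 : (kissingNumber G g : ℝ) ≤ ((rootedShortestCycles G g : ℕ) : ℝ) / g := by
    rw [kissingNumber]
    exact_mod_cast Nat.cast_div_le
  have hgpos : (0:ℝ) < (g : ℝ) := by rw [hgcast]; linarith
  have hnum : ((rootedShortestCycles G g : ℕ) : ℝ) ≤ (n : ℝ) * ((d:ℝ) * b ^ k) := by
    calc ((rootedShortestCycles G g : ℕ) : ℝ) ≤ ((n * (d * (d-1)^k) : ℕ) : ℝ) := by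
          exact_mod_cast hroot
      _ = (n : ℝ) * ((d:ℝ) * b ^ k) := by push_cast [hcastb]; ring
  have hchain2 : ((rootedShortestCycles G g : ℕ) : ℝ) / g
      ≤ ((n : ℝ) * ((d:ℝ) * b ^ k)) / (2 * (k:ℝ) + 1) := by
    rw [hgcast]
    exact div_le_div_of_nonneg_right' hnum (by linarith)
  have hchain3 : ((n : ℝ) * ((d:ℝ) * b ^ k)) / (2 * (k:ℝ) + 1) ≤ (n : ℝ) * M / (2 * R + 1) := by
    rw [div_le_div_iff₀ (by linarith) (by linarith)]
    rw [hMR]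
    have hn0 : (0:ℝ) ≤ (n : ℝ) := Nat.cast_nonneg n
    calc (n : ℝ) * ((d:ℝ) * b ^ k) * (2 * R + 1)
        = (n : ℝ) * (d:ℝ) * (b ^ k * (2 * R + 1)) := by ring
      _ ≤ (n : ℝ) * (d:ℝ) * (b ^ R * (2 * (k:ℝ) + 1)) := by
          apply mul_le_mul_of_nonneg_left hkey
          positivity
      _ = (n : ℝ) * ((d:ℝ) * b ^ R) * (2 * (k:ℝ) + 1) := by ring
  calc (kissingNumber G g : ℝ) ≤ ((rootedShortestCycles G g : ℕ) : ℝ) / g := hchain1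
    _ ≤ ((n : ℝ) * ((d:ℝ) * b ^ k)) / (2 * (k:ℝ) + 1) := hchain2
    _ ≤ (n : ℝ) * M / (2 * R + 1) := hchain3
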